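/- Let $s, y \in \mathbb{R}^n$ with $s^T y > 0$ and $\gamma > 0$. Define $\alpha^{BB'}(\gamma) = \frac{2 s^T y}{\|y\|^2 - \|s\|^2/\gamma^2 + \sqrt{(\|s\|^2/\gamma^2 - \|y\|^2)^2 + 4(s^Ty)^2/\gamma^2}}$, $\alpha^{BB1} = \frac{\|s\|^2}{s^Ty}$, and $\alpha^{BB2} = \frac{s^Ty}{\|y\|^2}$. Then $\alpha^{BB2} \le \alpha^{BB'}(\gamma) \le \alpha^{BB1}$, and $\gamma \mapsto \alpha^{BB'}(\gamma)$ is monotonically nonincreasing on $(0,\infty)$. -/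
import Mathlib

lemma aux_key (A B c t : ℝ) (hA : 0 < A) (hc : 0 < c) (hCS : c ^ 2 ≤ A * B) (ht : 0 ≤ t) :
    A * (A * t - B) + 2 * c ^ 2 ≤ A * Real.sqrt ((A * t - B) ^ 2 + 4 * c ^ 2 * t) := by
  have hX : (0:ℝ) ≤ (A * t - B) ^ 2 + 4 * c ^ 2 * t := by positivity
  have hs := Real.sqrt_nonneg ((A * t - B) ^ 2 + 4 * c ^ 2 * t)
  have hsq := Real.sq_sqrt hX
  rcases le_or_gt (A * (A * t - B) + 2 * c ^ 2) 0 with h | h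
  · exact h.trans (mul_nonneg hA.le hs)
  · have h2 : (A * (A * t - B) + 2 * c ^ 2) ^ 2 ≤ A ^ 2 * ((A * t - B) ^ 2 + 4 * c ^ 2 * t) := by
      nlinarith [mul_nonneg (mul_pos hc hc).le (sub_nonneg.2 hCS)]
    nlinarith [mul_nonneg hA.le hs, h2, hsq]

lemma aux_Dpos (A B c t : ℝ) (hc : 0 < c) (ht : 0 < t) :
    0 < B - A * t + Real.sqrt ((A * t - B) ^ 2 + 4 * c ^ 2 * t) := by
  have h1 : Real.sqrt ((A * t - B) ^ 2) < Real.sqrt ((A * t - B) ^ 2 + 4 * c ^ 2 * t) :=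
    Real.sqrt_lt_sqrt (sq_nonneg _) (by nlinarith [mul_pos (mul_pos hc hc) ht])
  rw [Real.sqrt_sq_eq_abs] at h1
  rcases abs_cases (A * t - B) with ⟨h2, h3⟩ | ⟨h2, h3⟩ <;> linarith

lemma aux_D_anti (A B c t1 t2 : ℝ) (hA : 0 < A) (hc : 0 < c) (hCS : c ^ 2 ≤ A * B)
    (ht1 : 0 ≤ t1) (h12 : t1 ≤ t2) :
    B - A * t2 + Real.sqrt ((A * t2 - B) ^ 2 + 4 * c ^ 2 * t2) ≤
      B - A * t1 + Real.sqrt ((A * t1 - B) ^ 2 + 4 * c ^ 2 * t1) := by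
  have hX1 : (0:ℝ) ≤ (A * t1 - B) ^ 2 + 4 * c ^ 2 * t1 := by positivity
  set S1 := Real.sqrt ((A * t1 - B) ^ 2 + 4 * c ^ 2 * t1) with hS1
  have hs1 : 0 ≤ S1 := Real.sqrt_nonneg _
  have hsq1 : S1 ^ 2 = (A * t1 - B) ^ 2 + 4 * c ^ 2 * t1 := Real.sq_sqrt hX1
  have hk := aux_key A B c t1 hA hc hCS ht1
  have hR : 0 ≤ S1 + A * (t2 - t1) := by nlinarith
  have h2 : (A * t2 - B) ^ 2 + 4 * c ^ 2 * t2 ≤ (S1 + A * (t2 - t1)) ^ 2 := by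
    nlinarith [mul_nonneg (sub_nonneg.2 h12) (sub_nonneg.2 hk)]
  have h3 : Real.sqrt ((A * t2 - B) ^ 2 + 4 * c ^ 2 * t2) ≤ S1 + A * (t2 - t1) :=
    calc Real.sqrt ((A * t2 - B) ^ 2 + 4 * c ^ 2 * t2)
        ≤ Real.sqrt ((S1 + A * (t2 - t1)) ^ 2) := Real.sqrt_le_sqrt h2
      _ = S1 + A * (t2 - t1) := Real.sqrt_sq hR
  linarith

lemma aux_bounds (A B c t : ℝ) (hA : 0 < A) (hB : 0 < B) (hc : 0 < c)
    (hCS : c ^ 2 ≤ A * B) (ht : 0 < t) :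
    c / B ≤ 2 * c / (B - A * t + Real.sqrt ((A * t - B) ^ 2 + 4 * c ^ 2 * t)) ∧
      2 * c / (B - A * t + Real.sqrt ((A * t - B) ^ 2 + 4 * c ^ 2 * t)) ≤ A / c := by
  have hD := aux_Dpos A B c t hc ht
  have hX : (0:ℝ) ≤ (A * t - B) ^ 2 + 4 * c ^ 2 * t := by positivity
  have hs := Real.sqrt_nonneg ((A * t - B) ^ 2 + 4 * c ^ 2 * t)
  constructor
  · rw [div_le_div_iff₀ hB hD]
    have hub : Real.sqrt ((A * t - B) ^ 2 + 4 * c ^ 2 * t) ≤ B + A * t := by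
      have h1 : (A * t - B) ^ 2 + 4 * c ^ 2 * t ≤ (B + A * t) ^ 2 := by
        nlinarith [mul_nonneg (sub_nonneg.2 hCS) ht.le]
      calc Real.sqrt ((A * t - B) ^ 2 + 4 * c ^ 2 * t)
          ≤ Real.sqrt ((B + A * t) ^ 2) := Real.sqrt_le_sqrt h1
        _ = B + A * t := Real.sqrt_sq (by positivity)
    nlinarith [mul_le_mul_of_nonneg_left hub hc.le]
  · rw [div_le_div_iff₀ hD hc]
    have hk := aux_key A B c t hA hc hCS ht.le
    nlinarith [hk]

lemma aux_main (A B c : ℝ) (hA : 0 < A) (hB : 0 < B) (hc : 0 < c) (hCS : c ^ 2 ≤ A * B) :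
    let α' : ℝ → ℝ := fun γ => (2 * c) /
      (B - A / γ ^ 2 + Real.sqrt ((A / γ ^ 2 - B) ^ 2 + 4 * c ^ 2 / γ ^ 2))
    (∀ γ : ℝ, 0 < γ → c / B ≤ α' γ ∧ α' γ ≤ A / c) ∧ AntitoneOn α' (Set.Ioi 0) := by
  intro α'
  have hα : ∀ γ : ℝ, α' γ = 2 * c /
      (B - A * (1 / γ ^ 2) + Real.sqrt ((A * (1 / γ ^ 2) - B) ^ 2 + 4 * c ^ 2 * (1 / γ ^ 2))) := by
    intro γ
    show (2 * c) / (B - A / γ ^ 2 + Real.sqrt ((A / γ ^ 2 - B) ^ 2 + 4 * c ^ 2 / γ ^ 2)) = _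
    rw [show A / γ ^ 2 = A * (1 / γ ^ 2) by ring,
      show (A * (1 / γ ^ 2) - B) ^ 2 + 4 * c ^ 2 / γ ^ 2
        = (A * (1 / γ ^ 2) - B) ^ 2 + 4 * c ^ 2 * (1 / γ ^ 2) by ring]
  constructor
  · intro γ hγ
    rw [hα γ]
    exact aux_bounds A B c (1 / γ ^ 2) hA hB hc hCS (by positivity)
  · intro γ1 h1 γ2 h2 h12
    have hγ1 : 0 < γ1 := h1
    have hγ2 : 0 < γ2 := h2
    rw [hα γ1, hα γ2]
    have htt : 1 / γ2 ^ 2 ≤ 1 / γ1 ^ 2 := by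
      apply one_div_le_one_div_of_le (by positivity)
      nlinarith
    have hanti := aux_D_anti A B c (1 / γ2 ^ 2) (1 / γ1 ^ 2) hA hc hCS (by positivity) htt
    have hD1 := aux_Dpos A B c (1 / γ1 ^ 2) hc (by positivity)
    have hD2 := aux_Dpos A B c (1 / γ2 ^ 2) hc (by positivity)
    rw [div_le_div_iff₀ hD2 hD1]
    nlinarith [hanti, hc]

theorem stmt_6 (n : ℕ) (s y : Fin n → ℝ) (hsy : 0 < ∑ i, s i * y i) :
    let c : ℝ := ∑ i, s i * y i
    let α' : ℝ → ℝ := fun γ => (2 * c) /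
      ((∑ i, y i ^ 2) - (∑ i, s i ^ 2) / γ ^ 2 +
        Real.sqrt (((∑ i, s i ^ 2) / γ ^ 2 - (∑ i, y i ^ 2)) ^ 2 + 4 * c ^ 2 / γ ^ 2))
    (∀ γ : ℝ, 0 < γ → c / (∑ i, y i ^ 2) ≤ α' γ ∧ α' γ ≤ (∑ i, s i ^ 2) / c) ∧
    AntitoneOn α' (Set.Ioi 0) := by
  intro c α'
  have hc : 0 < c := hsy
  have hCS : c ^ 2 ≤ (∑ i, s i ^ 2) * (∑ i, y i ^ 2) :=
    Finset.sum_mul_sq_le_sq_mul_sq Finset.univ s y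
  have hA0 : (0:ℝ) ≤ ∑ i, s i ^ 2 := Finset.sum_nonneg fun i _ => sq_nonneg _
  have hB0 : (0:ℝ) ≤ ∑ i, y i ^ 2 := Finset.sum_nonneg fun i _ => sq_nonneg _
  have hA : (0:ℝ) < ∑ i, s i ^ 2 := by nlinarith
  have hB : (0:ℝ) < ∑ i, y i ^ 2 := by nlinarith
  exact aux_main (∑ i, s i ^ 2) (∑ i, y i ^ 2) c hA hB hc hCS
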